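/- For all positive definite real symmetric n×n matrices X and Y, the matrix geometric mean is symmetric in its arguments: X^{1/2} (X^{-1/2} Y X^{-1/2})^{1/2} X^{1/2} = Y^{1/2} (Y^{-1/2} X Y^{-1/2})^{1/2} Y^{1/2}; i.e., X # Y = Y # X. -/

import Mathlib

open Matrix BigOperators

/- `msqrt A` is the positive semidefinite square root of `A` (junk value `0` when `A` is
not positive semidefinite). -/
open Classical in
noncomputable def msqrt {n : ℕ} (A : Matrix (Fin n) (Fin n) ℝ) : Matrix (Fin n) (Fin n) ℝ :=
  if h : A.PosSemidef then
    (h.1.eigenvectorUnitary : Matrix (Fin n) (Fin n) ℝ) *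
      diagonal ((↑) ∘ (√·) ∘ h.1.eigenvalues) *
      (star (h.1.eigenvectorUnitary : Matrix (Fin n) (Fin n) ℝ))
  else 0

/- The matrix geometric mean `X # Y = X^{1/2} (X^{-1/2} Y X^{-1/2})^{1/2} X^{1/2}`. -/
noncomputable def gmean {n : ℕ} (X Y : Matrix (Fin n) (Fin n) ℝ) : Matrix (Fin n) (Fin n) ℝ :=
  msqrt X * msqrt (msqrt X⁻¹ * Y * msqrt X⁻¹) * msqrt X

section aux

variable {n : ℕ}

open scoped MatrixOrder

lemma msqrt_eq {A : Matrix (Fin n) (Fin n) ℝ} (h : A.PosSemidef) : msqrt A = CFC.sqrt A := by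
  rw [CFC.sqrt_eq_cfc, cfc_nnreal_eq_real _ A, h.1.cfc_eq]
  simp only [msqrt, h, dif_pos, IsHermitian.cfc, Unitary.conjStarAlgAut_apply]
  congr 3
  ext i
  simp
  rw [max_eq_left (h.eigenvalues_nonneg i)]

lemma msqrt_posSemidef {A : Matrix (Fin n) (Fin n) ℝ} (h : A.PosSemidef) :
    (msqrt A).PosSemidef := by
  rw [msqrt_eq h]; exact (CFC.sqrt_nonneg A).posSemidef

lemma msqrt_mul_self {A : Matrix (Fin n) (Fin n) ℝ} (h : A.PosSemidef) :
    msqrt A * msqrt A = A := by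
  rw [msqrt_eq h]; exact CFC.sqrt_mul_sqrt_self A h.nonneg

lemma posDef_of_isUnit {A : Matrix (Fin n) (Fin n) ℝ}
    (hA : A.PosSemidef) (h : IsUnit A) : A.PosDef := by
  refine PosDef.of_dotProduct_mulVec_pos hA.1 fun x hx => ?_
  have h1 : A *ᵥ x ≠ 0 := by
    intro h0
    exact hx (Matrix.mulVec_injective_iff_isUnit.mpr h (by simpa using h0))
  have h2 : star x ⬝ᵥ A *ᵥ x ≠ 0 := fun h0 => h1 ((hA.dotProduct_mulVec_zero_iff x).mp h0)
  exact lt_of_le_of_ne ((posSemidef_iff_dotProduct_mulVec.mp hA).2 x) (Ne.symm h2)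

lemma msqrt_posDef {A : Matrix (Fin n) (Fin n) ℝ} (h : A.PosDef) :
    (msqrt A).PosDef := by
  refine posDef_of_isUnit (msqrt_posSemidef h.posSemidef) ?_
  have hd : (msqrt A).det * (msqrt A).det = A.det := by
    rw [← det_mul, msqrt_mul_self h.posSemidef]
  have hne : (msqrt A).det ≠ 0 := by
    intro h0
    rw [h0, mul_zero] at hd
    exact h.det_pos.ne hd
  exact (Matrix.isUnit_iff_isUnit_det _).mpr hne.isUnit

lemma msqrt_inv {A : Matrix (Fin n) (Fin n) ℝ} (h : A.PosDef) :
    msqrt A⁻¹ = (msqrt A)⁻¹ := by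
  have hS := msqrt_posDef h
  have hSi : (msqrt A)⁻¹.PosSemidef := hS.inv.posSemidef
  have hsq : (msqrt A)⁻¹ ^ 2 = A⁻¹ := by
    rw [pow_two, ← Matrix.mul_inv_rev, msqrt_mul_self h.posSemidef]
  have := (CFC.sqrt_unique (a := A⁻¹) (by rw [← pow_two]; exact hsq) hSi.nonneg).symm
  rw [msqrt_eq h.inv.posSemidef, ← this]

lemma gmean_posSemidef {X Y : Matrix (Fin n) (Fin n) ℝ}
    (hX : X.PosDef) (hY : Y.PosDef) : (gmean X Y).PosSemidef := by
  have hM : (msqrt X⁻¹ * Y * msqrt X⁻¹).PosSemidef := by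
    have := hY.posSemidef.mul_mul_conjTranspose_same (msqrt X⁻¹)
    rwa [(msqrt_posSemidef hX.inv.posSemidef).1] at this
  have := (msqrt_posSemidef hM).mul_mul_conjTranspose_same (msqrt X)
  rwa [(msqrt_posSemidef hX.posSemidef).1] at this

lemma gmean_riccati {X Y : Matrix (Fin n) (Fin n) ℝ}
    (hX : X.PosDef) (hY : Y.PosDef) : gmean X Y * X⁻¹ * gmean X Y = Y := by
  have hS := msqrt_posDef hX
  have hu : IsUnit (msqrt X).det := (Matrix.isUnit_iff_isUnit_det _).mp hS.isUnit
  have h1 : msqrt X * (msqrt X)⁻¹ = 1 := Matrix.mul_nonsing_inv _ hu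
  have h2 : (msqrt X)⁻¹ * msqrt X = 1 := Matrix.nonsing_inv_mul _ hu
  have hM : (msqrt X⁻¹ * Y * msqrt X⁻¹).PosSemidef := by
    have := hY.posSemidef.mul_mul_conjTranspose_same (msqrt X⁻¹)
    rwa [(msqrt_posSemidef hX.inv.posSemidef).1] at this
  have hMM := msqrt_mul_self hM
  have hinv : X⁻¹ = (msqrt X)⁻¹ * (msqrt X)⁻¹ := by
    rw [← Matrix.mul_inv_rev, msqrt_mul_self hX.posSemidef]
  set S := msqrt X with hSdef
  set M := msqrt (msqrt X⁻¹ * Y * msqrt X⁻¹) with hMdef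
  unfold gmean
  rw [← hSdef, ← hMdef, hinv]
  calc S * M * S * (S⁻¹ * S⁻¹) * (S * M * S)
      = S * (M * ((S * S⁻¹) * (S⁻¹ * S)) * M) * S := by noncomm_ring
    _ = S * (M * M) * S := by rw [h1, h2]; noncomm_ring
    _ = S * (msqrt X⁻¹ * Y * msqrt X⁻¹) * S := by rw [hMM]
    _ = (S * S⁻¹) * Y * (S⁻¹ * S) := by rw [msqrt_inv hX]; noncomm_ring
    _ = Y := by rw [h1, h2, one_mul, mul_one]

lemma psd_unique {W A B : Matrix (Fin n) (Fin n) ℝ} (hW : W.PosDef)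
    (hA : A.PosSemidef) (hB : B.PosSemidef)
    (h : A * W * A = B * W * B) : A = B := by
  set S := msqrt W with hSdef
  have hS := msqrt_posDef hW
  have hu : IsUnit S.det := (Matrix.isUnit_iff_isUnit_det _).mp hS.isUnit
  have h1 : S * S⁻¹ = 1 := Matrix.mul_nonsing_inv _ hu
  have h2 : S⁻¹ * S = 1 := Matrix.nonsing_inv_mul _ hu
  have hSS : S * S = W := msqrt_mul_self hW.posSemidef
  have hsa : (S * A * S).PosSemidef := by
    have := hA.mul_mul_conjTranspose_same S
    rwa [(msqrt_posSemidef hW.posSemidef).1] at this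
  have hsb : (S * B * S).PosSemidef := by
    have := hB.mul_mul_conjTranspose_same S
    rwa [(msqrt_posSemidef hW.posSemidef).1] at this
  have hsq : (S * A * S) ^ 2 = (S * B * S) ^ 2 := by
    have ea : (S * A * S) ^ 2 = S * (A * W * A) * S := by
      rw [pow_two, ← hSS]; noncomm_ring
    have eb : (S * B * S) ^ 2 = S * (B * W * B) * S := by
      rw [pow_two, ← hSS]; noncomm_ring
    rw [ea, eb, h]
  have heq : S * A * S = S * B * S := by
    rw [← CFC.sqrt_sq (S * A * S) hsa.nonneg, hsq, CFC.sqrt_sq _ hsb.nonneg]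
  have : S⁻¹ * (S * A * S) * S⁻¹ = S⁻¹ * (S * B * S) * S⁻¹ := by rw [heq]
  calc A = (S⁻¹ * S) * A * (S * S⁻¹) := by rw [h1, h2, one_mul, mul_one]
    _ = S⁻¹ * (S * A * S) * S⁻¹ := by noncomm_ring
    _ = S⁻¹ * (S * B * S) * S⁻¹ := this
    _ = (S⁻¹ * S) * B * (S * S⁻¹) := by noncomm_ring
    _ = B := by rw [h1, h2, one_mul, mul_one]

end aux

theorem stmt8 {n : ℕ} (X Y : Matrix (Fin n) (Fin n) ℝ)
    (hX : X.PosDef) (hY : Y.PosDef) :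
    gmean X Y = gmean Y X := by
  have h1 : gmean X Y * X⁻¹ * gmean X Y = Y := gmean_riccati hX hY
  have h2 : gmean Y X * Y⁻¹ * gmean Y X = X := gmean_riccati hY hX
  set G := gmean Y X with hG
  -- G is invertible
  have hdet : G.det * Y⁻¹.det * G.det = X.det := by
    rw [← det_mul, ← det_mul, h2]
  have hGdet : G.det ≠ 0 := by
    intro h0
    rw [h0, zero_mul, mul_zero] at hdet
    exact hX.det_pos.ne hdet
  have hGu : IsUnit G.det := hGdet.isUnit
  have hYu : IsUnit Y.det := (Matrix.isUnit_iff_isUnit_det _).mp hY.isUnit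
  -- from h2 : G * Y⁻¹ * G = X, derive G * X⁻¹ * G = Y
  have hXinv : X⁻¹ = G⁻¹ * Y * G⁻¹ := by
    rw [← h2, Matrix.mul_inv_rev, Matrix.mul_inv_rev, Matrix.nonsing_inv_nonsing_inv _ hYu]
    noncomm_ring
  have hg1 : G * G⁻¹ = 1 := Matrix.mul_nonsing_inv _ hGu
  have hg2 : G⁻¹ * G = 1 := Matrix.nonsing_inv_mul _ hGu
  have h3 : G * X⁻¹ * G = Y := by
    rw [hXinv]
    calc G * (G⁻¹ * Y * G⁻¹) * G = (G * G⁻¹) * Y * (G⁻¹ * G) := by noncomm_ring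
      _ = Y := by rw [hg1, hg2, one_mul, mul_one]
  exact psd_unique hX.inv (gmean_posSemidef hX hY) (gmean_posSemidef hY hX) (by rw [h1, h3])
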